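/- In the graphical construction of the multiplicative coalescent with linear deletion: for every t ≥ 0, almost surely every connected component of G_t contains only finitely many vertices i with λ_i ≤ t·m_i (i.e., each component is struck by only finitely many lightnings up to time t). -/

import Mathlib

open MeasureTheory ProbabilityTheory Filter
open scoped ENNReal

/-- The (real-valued) total weight of the connected component `C` of `G`. -/
noncomputable def compW {V : Type*} (x : V → ℝ) (G : SimpleGraph V)
    (C : G.ConnectedComponent) : ℝ :=
  ∑' v : {v : V // G.connectedComponentMk v = C}, x v

/-- The (extended-real-valued) total weight of the connected component `C` of `G`. -/
noncomputable def compWE {V : Type*} (x : V → ℝ) (G : SimpleGraph V)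
    (C : G.ConnectedComponent) : ℝ≥0∞ :=
  ∑' v : {v : V // G.connectedComponentMk v = C}, ENNReal.ofReal (x v)

/-- `S₂^G`: the sum of the squared component weights of `G` (with weights `x`). -/
noncomputable def S2E {V : Type*} (x : V → ℝ) (G : SimpleGraph V) : ℝ≥0∞ :=
  ∑' C : G.ConnectedComponent, compWE x G C ^ 2

/-- The decreasing rearrangement of a nonnegative family `w`: `ordOf w n` is the
`n`-th largest value (counted from `n = 0`). -/
noncomputable def ordOf {α : Type*} (w : α → ℝ) (n : ℕ) : ℝ :=
  sInf {r : ℝ | 0 ≤ r ∧ {a : α | r < w a}.Finite ∧ Nat.card {a : α | r < w a} ≤ n}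

/-- `ord(x, G)`: the decreasing rearrangement of the component weights of `G`. -/
noncomputable def ordSeq {V : Type*} (x : V → ℝ) (G : SimpleGraph V) : ℕ → ℝ :=
  ordOf (compW x G)

/-- The `ℓ₂` distance between two sequences. -/
noncomputable def l2dist (m m' : ℕ → ℝ) : ℝ :=
  Real.sqrt (∑' n, (m n - m' n) ^ 2)

/-- The `ℓ₂` distance between two sequences, with values in `ℝ≥0∞`. -/
noncomputable def l2edist (m m' : ℕ → ℝ) : ℝ≥0∞ :=
  (∑' n, ENNReal.ofReal ((m n - m' n) ^ 2)) ^ (2⁻¹ : ℝ)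

/-- The graphical-construction random graph on `ℕ`: the edge `{i,j}` is present
iff `ξ_{i,j} ≤ t·m_i·m_j`. -/
noncomputable def expGraph {Ω : Type*} (ξ : ℕ → ℕ → Ω → ℝ) (m : ℕ → ℝ) (t : ℝ)
    (ω : Ω) : SimpleGraph ℕ :=
  SimpleGraph.fromRel (fun i j => ξ (min i j) (max i j) ω ≤ t * m i * m j)

open Filter Topology

namespace Stmt11Aux


abbrev PIdx : Type := {p : ℕ × ℕ // p.1 < p.2} ⊕ ℕ

/-- the coordinate of the (unordered) pair `{a,b}`. -/
def co (a b : ℕ) : PIdx :=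
  if h : a < b then .inl ⟨(a, b), h⟩ else if h' : b < a then .inl ⟨(b, a), h'⟩ else .inr 0

lemma co_eq_cases {a b c d : ℕ} (hab : a ≠ b) (h : co a b = co c d) :
    (a = c ∧ b = d) ∨ (a = d ∧ b = c) := by
  unfold co at h
  split_ifs at h <;> simp_all [Prod.ext_iff] <;> omega

lemma co_ne_inr {a b : ℕ} (hab : a ≠ b) (i : ℕ) : co a b ≠ .inr i := by
  rcases lt_or_gt_of_ne hab with h1 | h1 <;> simp [co, h1, lt_asymm h1]

lemma prob_le_ofReal {Ω : Type*} [MeasurableSpace Ω] (μ : Measure Ω) [IsProbabilityMeasure μ]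
    (A : Set Ω) (hA : MeasurableSet A) (u : ℝ) (hu : 0 ≤ u)
    (h : μ Aᶜ = ENNReal.ofReal (Real.exp (-u))) : μ A ≤ ENNReal.ofReal u := by
  have h1 : μ A + μ Aᶜ = 1 := (measure_add_measure_compl hA).trans measure_univ
  rw [h] at h1
  have h2 : (1 : ℝ≥0∞) ≤ ENNReal.ofReal u + ENNReal.ofReal (Real.exp (-u)) := by
    rw [← ENNReal.ofReal_add hu (Real.exp_nonneg _), ← ENNReal.ofReal_one]
    apply ENNReal.ofReal_le_ofReal
    nlinarith [Real.add_one_le_exp (-u)]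
  rw [← h1] at h2
  exact (ENNReal.add_le_add_iff_right ENNReal.ofReal_ne_top).mp h2

lemma tsum_pi_prod : ∀ (n : ℕ) (h : Fin n → ℕ → ℝ≥0∞),
    ∑' w : Fin n → ℕ, ∏ l, h l (w l) = ∏ l, ∑' x, h l x := by
  intro n
  induction n with
  | zero =>
    intro h
    rw [tsum_eq_single (fun _ => 0) (fun w hw => absurd (funext fun l => l.elim0) hw)]
    simp
  | succ n ih =>
    intro h
    rw [← (Fin.consEquiv (fun _ : Fin (n+1) => ℕ)).tsum_eq]
    have heq : ∀ p : ℕ × (Fin n → ℕ),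
        (∏ l, h l ((Fin.consEquiv (fun _ : Fin (n+1) => ℕ)) p l))
          = h 0 p.1 * ∏ l : Fin n, h l.succ (p.2 l) := by
      intro p
      rw [Fin.prod_univ_succ]
      simp [Fin.consEquiv]
    calc ∑' p : ℕ × (Fin n → ℕ), ∏ l, h l ((Fin.consEquiv (fun _ : Fin (n+1) => ℕ)) p l)
        = ∑' p : ℕ × (Fin n → ℕ), h 0 p.1 * ∏ l : Fin n, h l.succ (p.2 l) :=
          tsum_congr heq
      _ = ∑' (a : ℕ) (b : Fin n → ℕ), h 0 a * ∏ l : Fin n, h l.succ (b l) := by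
          exact ENNReal.tsum_prod (f := fun (a : ℕ) (b : Fin n → ℕ) => h 0 a * ∏ l : Fin n, h l.succ (b l))
      _ = (∑' a : ℕ, h 0 a) * ∏ l : Fin n, ∑' x, h l.succ x := by
          rw [← ih (fun l x => h l.succ x)]
          rw [← ENNReal.tsum_mul_right]
          exact tsum_congr fun a => by rw [ENNReal.tsum_mul_left]
      _ = ∏ l, ∑' x, h l x := by rw [Fin.prod_univ_succ]

lemma prod_consec (a : ℕ → ℝ≥0∞) : ∀ r : ℕ,
    ∏ l ∈ Finset.range (r+1), (a l * a (l+1))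
      = a 0 * (∏ l ∈ Finset.range r, (a (l+1) * a (l+1))) * a (r+1) := by
  intro r
  induction r with
  | zero => simp
  | succ r ih =>
    rw [Finset.prod_range_succ, ih, Finset.prod_range_succ]
    ring



lemma exists_extract {Adj : ℕ → ℕ → Prop} (hsym : ∀ a b, Adj a b → Adj b a)
    {s : List ℕ} (hc : s.Chain' Adj) (hn : s.Nodup) {k i N : ℕ}
    (hh : s.head? = some k) (hl : s.getLast? = some i) (hk : k ≤ N) (hi : N < i) :
    ∃ c : List ℕ, c.Chain' Adj ∧ c.Nodup ∧ 2 ≤ c.length ∧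
      c.getD 0 0 ≤ N ∧ (∀ l, 1 ≤ l → l < c.length → N < c.getD l 0) ∧
      c.getD (c.length - 1) 0 = i := by
  classical
  set r := s.reverse with hr
  have hcr : r.Chain' Adj := by
    rw [hr]; unfold List.Chain'; rw [List.isChain_reverse]
    exact hc.imp (fun a b h => hsym a b h)
  have hnr : r.Nodup := by rw [hr, List.nodup_reverse]; exact hn
  have hhr : r.head? = some i := by rw [hr, List.head?_reverse]; exact hl
  have hkr : k ∈ r := by
    rw [hr, List.mem_reverse]
    exact List.mem_of_mem_head? hh
  set p : ℕ → Bool := fun x => decide (N < x) with hp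
  set A := r.takeWhile p with hA
  set B := r.dropWhile p with hB
  have hAB : A ++ B = r := List.takeWhile_append_dropWhile (p := p) (l := r)
  have hBne : B ≠ [] := by
    intro hBe
    rw [hBe, List.append_nil] at hAB
    rw [hA] at hAB
    have hkA : k ∈ List.takeWhile p r := by rw [hAB]; exact hkr
    have : p k := List.mem_takeWhile_imp hkA
    simp [hp] at this
    omega
  obtain ⟨j, B', hBj⟩ := List.exists_cons_of_ne_nil hBne
  have hj : ¬ (N < j) := by
    have := List.head?_dropWhile_not p r
    rw [← hB, hBj] at this
    simpa [hp] using this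
  have hAne : A ≠ [] := by
    intro hAe
    rw [hAe, List.nil_append] at hAB
    rw [← hAB, hBj] at hhr
    simp at hhr
    omega
  have hprefix : (A ++ [j]) <+: r := by
    refine ⟨B', ?_⟩
    rw [List.append_assoc, List.singleton_append, ← hBj, hAB]
  have hcc : (A ++ [j]).Chain' Adj := hcr.prefix hprefix
  have hncc : (A ++ [j]).Nodup := hnr.sublist hprefix.sublist
  have hhA : A.head? = some i := by
    have : r.head? = A.head? := by
      rw [← hAB, List.head?_append_of_ne_nil _ hAne]
    rw [this] at hhr; exact hhr
  refine ⟨(A ++ [j]).reverse, ?_, ?_, ?_, ?_, ?_, ?_⟩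
  · unfold List.Chain'; rw [List.isChain_reverse]
    exact hcc.imp (fun a b h => hsym a b h)
  · rw [List.nodup_reverse]; exact hncc
  · rw [List.length_reverse, List.length_append]
    have := List.length_pos_iff.mpr hAne
    simp; omega
  · have : (A ++ [j]).reverse = j :: A.reverse := by
      rw [List.reverse_append]; rfl
    rw [this]
    simpa using hj
  · intro l hl1 hl2
    have hrev : (A ++ [j]).reverse = j :: A.reverse := by
      rw [List.reverse_append]; rfl
    rw [hrev] at hl2 ⊢
    simp only [List.length_cons, List.length_reverse] at hl2
    rcases Nat.exists_eq_add_of_le hl1 with ⟨l', rfl⟩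
    rw [Nat.add_comm 1 l'] at hl2 ⊢
    rw [List.getD_cons_succ]
    have hlt : l' < A.reverse.length := by
      rw [List.length_reverse]; omega
    rw [List.getD_eq_getElem _ _ hlt]
    have hmem : A.reverse[l'] ∈ A := by
      rw [← List.mem_reverse]
      exact List.getElem_mem hlt
    have hmem2 : A.reverse[l'] ∈ List.takeWhile p r := by rw [← hA]; exact hmem
    have := List.mem_takeWhile_imp hmem2
    simpa [hp] using this
  · have hne : (A ++ [j]).reverse ≠ [] := by simp
    rw [List.getD_eq_getElem _ _ (by
      have := List.length_pos_iff.mpr hne; omega)]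
    have : ((A ++ [j]).reverse).getLast (by simp) = i := by
      rw [List.getLast_reverse]
      have : (A ++ [j]).head (by simp [hAne]) = A.head hAne := by
        rw [List.head_append_of_ne_nil hAne]
      rw [this]
      have := List.head?_eq_head (l := A) hAne
      rw [hhA] at this
      exact (Option.some_injective _ this.symm)
    rw [← this, List.getLast_eq_getElem]
    try congr 1
    try simp


end Stmt11Aux

open Stmt11Aux

set_option maxHeartbeats 2000000 in
/-- For every `t ≥ 0`, almost surely every connected component of `G_t` contains only
finitely many vertices `i` with `λ_i ≤ t m_i` (finitely many lightnings per component). -/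
theorem stmt11 {Ω : Type*} [MeasurableSpace Ω] (μ : Measure Ω) [IsProbabilityMeasure μ]
    (m : ℕ → ℝ) (hmono : Antitone m) (hpos : ∀ i, 0 ≤ m i)
    (hm2 : Summable fun i => m i ^ 2)
    (lam : ℝ) (hlam : 0 < lam)
    (ξ : ℕ → ℕ → Ω → ℝ) (hmeasξ : ∀ i j, Measurable (ξ i j))
    (lv : ℕ → Ω → ℝ) (hmeasl : ∀ i, Measurable (lv i))
    (hlawξ : ∀ i j, i < j → ∀ s : ℝ, 0 ≤ s →
      μ {ω | s < ξ i j ω} = ENNReal.ofReal (Real.exp (-s)))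
    (hlawl : ∀ i, ∀ s : ℝ, 0 ≤ s →
      μ {ω | s < lv i ω} = ENNReal.ofReal (Real.exp (-(lam * s))))
    (hindep : iIndepFun
      (Sum.elim (fun p : {p : ℕ × ℕ // p.1 < p.2} => ξ p.1.1 p.1.2)
        (fun i : ℕ => lv i)) μ)
    (t : ℝ) (ht : 0 ≤ t) :
    μ {ω | ∀ k : ℕ,
      {i : ℕ | (expGraph ξ m t ω).Reachable k i ∧ lv i ω ≤ t * m i}.Finite} = 1 := by
  classical
  -- adjacency characterization
  have hadj : ∀ (ω : Ω) (a b : ℕ), (expGraph ξ m t ω).Adj a b ↔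
      (a ≠ b ∧ ξ (min a b) (max a b) ω ≤ t * m a * m b) := by
    intro ω a b
    rw [expGraph, SimpleGraph.fromRel_adj]
    constructor
    · rintro ⟨hne, h | h⟩
      · exact ⟨hne, h⟩
      · rw [min_comm b a, max_comm b a, mul_right_comm] at h
        exact ⟨hne, h⟩
    · rintro ⟨hne, h⟩
      exact ⟨hne, Or.inl h⟩
  -- coordinates, events, independence
  set F := Sum.elim (fun p : {p : ℕ × ℕ // p.1 < p.2} => ξ p.1.1 p.1.2) (fun i : ℕ => lv i)
    with hF
  set thr : PIdx → ℝ :=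
    Sum.elim (fun p => t * m p.1.1 * m p.1.2) (fun i => t * m i) with hthr
  set g : PIdx → Set Ω := fun x => F x ⁻¹' Set.Iic (thr x) with hg
  have hprod : ∀ s : Finset PIdx, μ (⋂ x ∈ s, g x) = ∏ x ∈ s, μ (g x) := by
    intro s
    exact hindep.measure_inter_preimage_eq_mul s (fun x _ => measurableSet_Iic)
  set e : ℕ → ℝ≥0∞ := fun x => ENNReal.ofReal (m x) with he
  set T : ℝ≥0∞ := ENNReal.ofReal t with hT
  set L : ℝ≥0∞ := ENNReal.ofReal lam with hL
  have hofmul : ∀ a b : ℕ, ENNReal.ofReal (t * m a * m b) = T * (e a * e b) := by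
    intro a b
    rw [ENNReal.ofReal_mul (mul_nonneg ht (hpos a)), ENNReal.ofReal_mul ht, mul_assoc]
  have hedge : ∀ a b : ℕ, a ≠ b → μ (g (co a b)) ≤ T * (e a * e b) := by
    have key : ∀ (u v : ℕ) (huv : u < v),
        μ (g (Sum.inl ⟨(u, v), huv⟩)) ≤ ENNReal.ofReal (t * m u * m v) := by
      intro u v huv
      have hnn : 0 ≤ t * m u * m v := mul_nonneg (mul_nonneg ht (hpos u)) (hpos v)
      refine prob_le_ofReal μ (g (Sum.inl ⟨(u, v), huv⟩)) ((hmeasξ u v) measurableSet_Iic) _ hnn ?_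
      have hcompl : (g (Sum.inl ⟨(u, v), huv⟩))ᶜ = {ω | t * m u * m v < ξ u v ω} := by
        ext ω
        simp [hg, hF, hthr, not_le]
      rw [hcompl]
      exact hlawξ u v huv _ hnn
    intro a b hne
    rcases lt_or_gt_of_ne hne with h1 | h1
    · have hco : co a b = Sum.inl ⟨(a, b), h1⟩ := by simp [co, h1]
      rw [hco, ← hofmul]
      exact key a b h1
    · have hco : co a b = Sum.inl ⟨(b, a), h1⟩ := by simp [co, h1, lt_asymm h1]
      rw [hco, ← hofmul]
      calc μ (g (Sum.inl ⟨(b, a), h1⟩)) ≤ ENNReal.ofReal (t * m b * m a) := key b a h1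
        _ = ENNReal.ofReal (t * m a * m b) := by rw [mul_right_comm]
  have hstrike : ∀ i : ℕ, μ (g (Sum.inr i)) ≤ L * (T * e i) := by
    intro i
    have hnn : 0 ≤ t * m i := mul_nonneg ht (hpos i)
    have hnn' : 0 ≤ lam * (t * m i) := mul_nonneg hlam.le hnn
    have hb : μ (g (Sum.inr i)) ≤ ENNReal.ofReal (lam * (t * m i)) := by
      refine prob_le_ofReal μ (g (Sum.inr i)) ((hmeasl i) measurableSet_Iic) _ hnn' ?_
      have hcompl : (g (Sum.inr i))ᶜ = {ω | t * m i < lv i ω} := by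
        ext ω
        simp [hg, hF, hthr, not_le]
      rw [hcompl]
      exact hlawl i _ hnn
    calc μ (g (Sum.inr i)) ≤ ENNReal.ofReal (lam * (t * m i)) := hb
      _ = L * (T * e i) := by
          rw [ENNReal.ofReal_mul hlam.le, ENNReal.ofReal_mul ht]
  -- the per-`k` null set
  have hknull : ∀ k : ℕ,
      μ {ω | ¬ ({i : ℕ | (expGraph ξ m t ω).Reachable k i ∧ lv i ω ≤ t * m i}).Finite} = 0 := by
    intro k
    -- choose N
    obtain ⟨N, hkN, hDle⟩ : ∃ N : ℕ, k ≤ N ∧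
        (∑' x : ℕ, if N < x then T * (e x * e x) else 0) ≤ 2⁻¹ := by
      have htail : Tendsto (fun n => t * ∑' x : ℕ, m (x + n) ^ 2) atTop (𝓝 0) := by
        have h0 := tendsto_sum_nat_add (fun x => m x ^ 2)
        simpa using h0.const_mul t
      have hev : ∀ᶠ n in atTop, t * (∑' x : ℕ, m (x + n) ^ 2) ≤ 1/2 :=
        htail.eventually_le_const (by norm_num)
      obtain ⟨n, hn1, hn2⟩ := ((eventually_ge_atTop (k + 1)).and hev).exists
      refine ⟨n - 1, by omega, ?_⟩
      have hinj : Function.Injective (fun y : ℕ => y + n) := fun a b h => by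
        simpa using h
      have h1 : (∑' x : ℕ, if n - 1 < x then T * (e x * e x) else 0)
          = ∑' y : ℕ, T * (e (y + n) * e (y + n)) := by
        rw [← hinj.tsum_eq ?hs]
        case hs =>
          intro x hx
          rw [Function.mem_support] at hx
          by_contra hc
          apply hx
          have hxn : x < n := by
            by_contra hxn
            exact hc ⟨x - n, by simp; omega⟩
          show (if n - 1 < x then T * (e x * e x) else 0) = 0
          exact if_neg (by omega)
        exact tsum_congr fun y => by rw [if_pos (by omega)]
      have h2 : ∀ y : ℕ, e (y + n) * e (y + n) = ENNReal.ofReal (m (y + n) ^ 2) := by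
        intro y
        rw [he]
        simp only []
        rw [← ENNReal.ofReal_mul (hpos _), sq]
      have hsum : Summable fun y : ℕ => m (y + n) ^ 2 := (summable_nat_add_iff n).mpr hm2
      calc (∑' x : ℕ, if n - 1 < x then T * (e x * e x) else 0)
          = ∑' y : ℕ, T * (e (y + n) * e (y + n)) := h1
        _ = T * ENNReal.ofReal (∑' y : ℕ, m (y + n) ^ 2) := by
            rw [ENNReal.tsum_mul_left, ENNReal.ofReal_tsum_of_nonneg (fun y => sq_nonneg _) hsum]
            exact congrArg _ (tsum_congr h2)
        _ = ENNReal.ofReal (t * ∑' y : ℕ, m (y + n) ^ 2) := by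
            rw [hT, ← ENNReal.ofReal_mul ht]
        _ ≤ ENNReal.ofReal (1/2) := ENNReal.ofReal_le_ofReal hn2
        _ ≤ 2⁻¹ := by
            rw [show (1/2 : ℝ) = (2 : ℝ)⁻¹ by norm_num,
              ENNReal.ofReal_inv_of_pos (by norm_num)]
            simp [ENNReal.ofReal_ofNat]
    set A : ℝ≥0∞ := ∑' x : ℕ, if x ≤ N then e x else 0 with hA
    have hAfin : A ≠ ∞ := by
      rw [hA, tsum_eq_sum (s := Finset.range (N + 1))
        (fun x hx => if_neg (by simp at hx ⊢; omega))]
      exact (ENNReal.sum_lt_top.mpr fun a _ => by split <;> simp [he, ENNReal.ofReal_lt_top]).ne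
    set D : ℝ≥0∞ := ∑' x : ℕ, if N < x then T * (e x * e x) else 0 with hD
    set RS : ℕ → Set Ω := fun i =>
      {ω | (expGraph ξ m t ω).Reachable k i ∧ lv i ω ≤ t * m i} with hRSdef
    set Cst : ℝ≥0∞ := L * T * A * T * 2 with hCst
    have hCfin : Cst ≠ ∞ := by
      rw [hCst]
      refine ENNReal.mul_ne_top (ENNReal.mul_ne_top (ENNReal.mul_ne_top (ENNReal.mul_ne_top ?_ ?_) hAfin) ?_) ?_
      all_goals simp [hL, hT, ENNReal.ofReal_ne_top]
    have hRSbound : ∀ i : ℕ, N < i → μ (RS i) ≤ Cst * (e i * e i) := by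
      intro i hNi
      set H : ℕ → ℕ → ℕ → ℝ≥0∞ := fun r l x =>
        if l = 0 then (if x ≤ N then e x else 0)
        else if l = r + 1 then (if x = i then T * (e x * e x) else 0)
        else (if N < x then T * (e x * e x) else 0) with hH
      set vf : (r : ℕ) → (Fin (r + 2) → ℕ) → ℕ → ℕ :=
        fun r w l => if h : l < r + 2 then w ⟨l, h⟩ else 0 with hvf
      set sF : ℕ → (ℕ → ℕ) → Finset PIdx := fun r V =>
        ((Finset.range (r + 1)).image fun l => co (V l) (V (l + 1))) ∪ {Sum.inr i} with hsF
      set Ev : ℕ → (ℕ → ℕ) → Set Ω := fun r V => ⋂ x ∈ sF r V, g x with hEv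
      set GoodP : ℕ → (ℕ → ℕ) → Prop := fun r V =>
        V 0 ≤ N ∧ (∀ l, 1 ≤ l → l ≤ r + 1 → N < V l) ∧
        (∀ l l', l ≤ r + 1 → l' ≤ r + 1 → V l = V l' → l = l') ∧ V (r + 1) = i with hGoodP
      -- inclusion into the union of path events
      have hincl : RS i ⊆ ⋃ σ : (r : ℕ) × (Fin (r + 2) → ℕ),
          ⋃ (_ : GoodP σ.1 (vf σ.1 σ.2)), Ev σ.1 (vf σ.1 σ.2) := by
        rintro ω ⟨hreach, hstrik⟩
        obtain ⟨w0⟩ := hreach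
        have hpath : w0.bypass.IsPath := w0.bypass_isPath
        set p := w0.bypass with hpdef
        have hchain : List.Chain' (expGraph ξ m t ω).Adj p.support := p.isChain_adj_support
        have hnodup : p.support.Nodup := hpath.support_nodup
        have hhead : p.support.head? = some k := by rw [p.support_eq_cons]; rfl
        have hlastsup : p.support.getLast? = some i := by
          rw [List.getLast?_eq_getLast p.support_ne_nil, p.getLast_support]
        obtain ⟨c, hc1, hc2, hc3, hc4, hc5, hc6⟩ :=
          exists_extract (fun a b h => h.symm) hchain hnodup hhead hlastsup hkN hNi
        set r := c.length - 2 with hr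
        have hlen : c.length = r + 2 := by omega
        refine Set.mem_iUnion.mpr ⟨⟨r, fun l' : Fin (r + 2) => c.getD (l' : ℕ) 0⟩, ?_⟩
        have hVeq : ∀ l : ℕ,
            vf r (fun l' : Fin (r + 2) => c.getD (l' : ℕ) 0) l = c.getD l 0 := by
          intro l
          by_cases hl : l < r + 2
          · simp [hvf, hl]
          · simp only [hvf, dif_neg hl]
            rw [List.getD_eq_default]
            omega
        have hgetD : ∀ (l : ℕ) (hl : l < c.length), c.getD l 0 = c.get ⟨l, hl⟩ := by
          intro l hl
          rw [List.getD_eq_getElem _ _ hl]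
          simp
        have hinj : ∀ l l', l ≤ r + 1 → l' ≤ r + 1 →
            vf r (fun l' : Fin (r + 2) => c.getD (l' : ℕ) 0) l
              = vf r (fun l' : Fin (r + 2) => c.getD (l' : ℕ) 0) l' → l = l' := by
          intro l l' hl hl' hVe
          rw [hVeq, hVeq, hgetD l (by omega), hgetD l' (by omega)] at hVe
          have := List.nodup_iff_injective_get.mp hc2 hVe
          exact Fin.mk.inj_iff.mp this
        have hgood : GoodP r (vf r (fun l' : Fin (r + 2) => c.getD (l' : ℕ) 0)) := by
          refine ⟨?_, ?_, hinj, ?_⟩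
          · rw [hVeq]; exact hc4
          · intro l h1 h2; rw [hVeq]; exact hc5 l h1 (by omega)
          · rw [hVeq]
            have hl1 : c.length - 1 = r + 1 := by omega
            rw [← hl1]
            exact hc6
        refine Set.mem_iUnion.mpr ⟨hgood, ?_⟩
        simp only [hEv]
        refine Set.mem_iInter₂.mpr ?_
        intro x hx
        simp only [hsF] at hx
        rcases Finset.mem_union.mp hx with hx | hx
        · obtain ⟨l, hl, rfl⟩ := Finset.mem_image.mp hx
          rw [Finset.mem_range] at hl
          have hadjc : (expGraph ξ m t ω).Adj (c.get ⟨l, by omega⟩) (c.get ⟨l + 1, by omega⟩) :=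
            List.isChain_iff_getElem.mp hc1 l (by omega)
          obtain ⟨hne2, hle2⟩ := (hadj ω _ _).mp hadjc
          have hVl : vf r (fun l' : Fin (r + 2) => c.getD (l' : ℕ) 0) l = c.get ⟨l, by omega⟩ := by
            rw [hVeq]; exact hgetD l (by omega)
          have hVl1 : vf r (fun l' : Fin (r + 2) => c.getD (l' : ℕ) 0) (l + 1)
              = c.get ⟨l + 1, by omega⟩ := by
            rw [hVeq]; exact hgetD (l + 1) (by omega)
          rw [← hVl, ← hVl1] at hne2 hle2
          set a := vf r (fun l' : Fin (r + 2) => c.getD (l' : ℕ) 0) l with ha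
          set b := vf r (fun l' : Fin (r + 2) => c.getD (l' : ℕ) 0) (l + 1) with hb
          rcases lt_or_gt_of_ne hne2 with h1 | h1
          · have hco : co a b = Sum.inl ⟨(a, b), h1⟩ := by simp [co, h1]
            rw [hco, hg]
            simp only [Set.mem_preimage, Set.mem_Iic]
            rw [min_eq_left h1.le, max_eq_right h1.le] at hle2
            exact hle2
          · have hco : co a b = Sum.inl ⟨(b, a), h1⟩ := by simp [co, h1, lt_asymm h1]
            rw [hco, hg]
            simp only [Set.mem_preimage, Set.mem_Iic]
            rw [min_eq_right h1.le, max_eq_left h1.le, mul_right_comm] at hle2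
            exact hle2
        · rw [Finset.mem_singleton] at hx
          subst hx
          rw [hg]
          simp only [Set.mem_preimage, Set.mem_Iic]
          exact hstrik
      -- measure bound for a single path event
      have hbound : ∀ (r : ℕ) (V : ℕ → ℕ), GoodP r V →
          μ (Ev r V) ≤ L * T * ∏ l ∈ Finset.range (r + 2), H r l (V l) := by
        intro r V hgood
        obtain ⟨hg0, hgmid, hginj, hglast⟩ := hgood
        have hne : ∀ l, l ≤ r → V l ≠ V (l + 1) := fun l hl h => by
          have := hginj l (l + 1) (by omega) (by omega) h
          omega
        have hdisj : Disjoint ((Finset.range (r + 1)).image fun l => co (V l) (V (l + 1)))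
            ({Sum.inr i} : Finset PIdx) := by
          rw [Finset.disjoint_singleton_right]
          intro hmem
          obtain ⟨l, hl, hco⟩ := Finset.mem_image.mp hmem
          rw [Finset.mem_range] at hl
          exact co_ne_inr (hne l (by omega)) i hco
        have hinj2 : Set.InjOn (fun l => co (V l) (V (l + 1))) ↑(Finset.range (r + 1)) := by
          intro l hl l' hl' hcoe
          rw [Finset.coe_range, Set.mem_Iio] at hl hl'
          rcases co_eq_cases (hne l (by omega)) hcoe with ⟨h1, h2⟩ | ⟨h1, h2⟩
          · exact hginj l l' (by omega) (by omega) h1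
          · have e1 := hginj l (l' + 1) (by omega) (by omega) h1
            have e2 := hginj (l + 1) l' (by omega) (by omega) h2
            omega
        have hmeas : μ (Ev r V) = (∏ l ∈ Finset.range (r + 1), μ (g (co (V l) (V (l + 1)))))
            * μ (g (Sum.inr i)) := by
          simp only [hEv, hsF]
          rw [hprod, Finset.prod_union hdisj, Finset.prod_image hinj2, Finset.prod_singleton]
        rw [hmeas]
        have hle1 : (∏ l ∈ Finset.range (r + 1), μ (g (co (V l) (V (l + 1)))))
            ≤ ∏ l ∈ Finset.range (r + 1), (T * (e (V l) * e (V (l + 1)))) :=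
          Finset.prod_le_prod' fun l hl =>
            hedge _ _ (hne l (by rw [Finset.mem_range] at hl; omega))
        calc (∏ l ∈ Finset.range (r + 1), μ (g (co (V l) (V (l + 1))))) * μ (g (Sum.inr i))
            ≤ (∏ l ∈ Finset.range (r + 1), (T * (e (V l) * e (V (l + 1))))) * (L * (T * e i)) :=
              mul_le_mul' hle1 (hstrike i)
          _ = L * T * ∏ l ∈ Finset.range (r + 2), H r l (V l) := by
              have hH0 : H r 0 (V 0) = e (V 0) := by
                simp only [hH]
                simp [hg0]
              have hHlast : H r (r + 1) (V (r + 1)) = T * (e i * e i) := by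
                simp only [hH]
                simp [hglast]
              have hHmid : ∀ l ∈ Finset.range r,
                  H r (l + 1) (V (l + 1)) = T * (e (V (l + 1)) * e (V (l + 1))) := by
                intro l hl
                rw [Finset.mem_range] at hl
                have hne1 : l + 1 ≠ r + 1 := by omega
                simp only [hH]
                simp [hne1, show l ≠ r by omega, hgmid (l + 1) (by omega) (by omega)]
              have hHexp : ∏ l ∈ Finset.range (r + 2), H r l (V l)
                  = (∏ l ∈ Finset.range r, (T * (e (V (l + 1)) * e (V (l + 1)))))
                      * e (V 0) * (T * (e i * e i)) := by
                rw [Finset.prod_range_succ, Finset.prod_range_succ', hH0, hHlast,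
                  Finset.prod_congr rfl hHmid]
              have hEexp : ∏ l ∈ Finset.range (r + 1), (T * (e (V l) * e (V (l + 1))))
                  = T ^ (r + 1) * ((e (V 0))
                      * (∏ l ∈ Finset.range r, (e (V (l + 1)) * e (V (l + 1)))) * e (V (r + 1))) := by
                rw [Finset.prod_mul_distrib, Finset.prod_const, Finset.card_range, prod_consec]
              have hsplit : (∏ l ∈ Finset.range r, (T * (e (V (l + 1)) * e (V (l + 1)))))
                  = T ^ r * ∏ l ∈ Finset.range r, (e (V (l + 1)) * e (V (l + 1))) := by
                rw [Finset.prod_mul_distrib, Finset.prod_const, Finset.card_range]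
              rw [hEexp, hHexp, hsplit, hglast]
              ring
      have hmuEv : ∀ σ : (r : ℕ) × (Fin (r + 2) → ℕ),
          μ (⋃ (_ : GoodP σ.1 (vf σ.1 σ.2)), Ev σ.1 (vf σ.1 σ.2))
            ≤ L * T * ∏ l ∈ Finset.range (σ.1 + 2), H σ.1 l (vf σ.1 σ.2 l) := by
        intro σ
        by_cases hgood : GoodP σ.1 (vf σ.1 σ.2)
        · exact (measure_mono (Set.iUnion_subset fun _ => subset_rfl)).trans
            (hbound _ _ hgood)
        · simp [hgood]
      have hperR : ∀ r : ℕ, (∑' w : Fin (r + 2) → ℕ,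
          L * T * ∏ l ∈ Finset.range (r + 2), H r l (vf r w l))
            = L * T * (A * (D ^ r * (T * (e i * e i)))) := by
        intro r
        rw [ENNReal.tsum_mul_left]
        congr 1
        have hconv : ∀ w : Fin (r + 2) → ℕ,
            ∏ l ∈ Finset.range (r + 2), H r l (vf r w l)
              = ∏ l : Fin (r + 2), H r (l : ℕ) (w l) := by
          intro w
          rw [← Fin.prod_univ_eq_prod_range]
          refine Finset.prod_congr rfl fun l _ => ?_
          have : vf r w (l : ℕ) = w l := by simp [hvf, l.isLt]
          rw [this]
        rw [tsum_congr hconv, tsum_pi_prod]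
        rw [Fin.prod_univ_eq_prod_range (fun l => ∑' x, H r l x) (r + 2)]
        have h0 : (∑' x : ℕ, H r 0 x) = A := by
          rw [hA]
          exact tsum_congr fun x => by simp only [hH]; simp
        have hla : (∑' x : ℕ, H r (r + 1) x) = T * (e i * e i) := by
          rw [tsum_eq_single i (fun x hx => by simp only [hH]; simp [hx])]
          simp only [hH]
          simp
        have hmid : ∀ l ∈ Finset.range r, (∑' x : ℕ, H r (l + 1) x) = D := by
          intro l hl
          rw [Finset.mem_range] at hl
          rw [hD]
          have hne1 : l + 1 ≠ r + 1 := by omega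
          exact tsum_congr fun x => by simp only [hH]; simp [hne1, show l ≠ r by omega]
        rw [Finset.prod_range_succ, Finset.prod_range_succ', h0, hla,
          Finset.prod_congr rfl hmid, Finset.prod_const, Finset.card_range]
        ring
      have hDsum : (∑' r : ℕ, D ^ r) ≤ 2 := by
        calc (∑' r : ℕ, D ^ r) ≤ ∑' r : ℕ, (2⁻¹ : ℝ≥0∞) ^ r :=
            ENNReal.tsum_le_tsum fun r => pow_le_pow_left₀ zero_le hDle r
          _ = 2 := by rw [ENNReal.tsum_geometric, ENNReal.one_sub_inv_two, inv_inv]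
      calc μ (RS i) ≤ μ (⋃ σ : (r : ℕ) × (Fin (r + 2) → ℕ),
            ⋃ (_ : GoodP σ.1 (vf σ.1 σ.2)), Ev σ.1 (vf σ.1 σ.2)) := measure_mono hincl
        _ ≤ ∑' σ : (r : ℕ) × (Fin (r + 2) → ℕ),
            μ (⋃ (_ : GoodP σ.1 (vf σ.1 σ.2)), Ev σ.1 (vf σ.1 σ.2)) := measure_iUnion_le _
        _ ≤ ∑' σ : (r : ℕ) × (Fin (r + 2) → ℕ),
            L * T * ∏ l ∈ Finset.range (σ.1 + 2), H σ.1 l (vf σ.1 σ.2 l) :=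
            ENNReal.tsum_le_tsum hmuEv
        _ = ∑' (r : ℕ) (w : Fin (r + 2) → ℕ),
            L * T * ∏ l ∈ Finset.range (r + 2), H r l (vf r w l) := ENNReal.tsum_sigma' _
        _ = ∑' r : ℕ, L * T * (A * (D ^ r * (T * (e i * e i)))) := tsum_congr hperR
        _ = ∑' r : ℕ, (L * T * A * T * (e i * e i)) * D ^ r := tsum_congr fun r => by ring
        _ = (L * T * A * T * (e i * e i)) * ∑' r : ℕ, D ^ r := ENNReal.tsum_mul_left
        _ ≤ (L * T * A * T * (e i * e i)) * 2 := mul_le_mul_right hDsum _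
        _ = Cst * (e i * e i) := by rw [hCst]; ring
    -- conclusion via tail sums
    have hsub : ∀ n : ℕ, N + 1 ≤ n →
        {ω | ¬ ({i : ℕ | (expGraph ξ m t ω).Reachable k i ∧ lv i ω ≤ t * m i}).Finite}
          ⊆ ⋃ j : ℕ, RS (j + n) := by
      intro n hn ω hω
      simp only [Set.mem_setOf_eq] at hω
      have hns : ¬ ({i : ℕ | (expGraph ξ m t ω).Reachable k i ∧ lv i ω ≤ t * m i} ⊆ Set.Iio n) :=
        fun hss => hω ((Set.finite_Iio n).subset hss)
      rw [Set.not_subset] at hns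
      obtain ⟨i, hi1, hi2⟩ := hns
      simp only [Set.mem_Iio, not_lt] at hi2
      refine Set.mem_iUnion.mpr ⟨i - n, ?_⟩
      have hieq : i - n + n = i := by omega
      rw [hRSdef]
      simp only [hieq]
      exact hi1
    have hFsum : (∑' i : ℕ, Cst * (e i * e i)) ≠ ∞ := by
      rw [ENNReal.tsum_mul_left]
      refine ENNReal.mul_ne_top hCfin ?_
      have h2 : ∀ y : ℕ, e y * e y = ENNReal.ofReal (m y ^ 2) := fun y => by
        rw [he]
        simp only []
        rw [← ENNReal.ofReal_mul (hpos _), sq]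
      rw [tsum_congr h2, ← ENNReal.ofReal_tsum_of_nonneg (fun y => sq_nonneg _) hm2]
      exact ENNReal.ofReal_ne_top
    have htends := ENNReal.tendsto_sum_nat_add (fun i => Cst * (e i * e i)) hFsum
    have hlast : μ {ω | ¬ ({i : ℕ | (expGraph ξ m t ω).Reachable k i
        ∧ lv i ω ≤ t * m i}).Finite} ≤ 0 := by
      refine ge_of_tendsto htends ?_
      filter_upwards [eventually_ge_atTop (N + 1)] with n hn
      calc μ {ω | ¬ ({i : ℕ | (expGraph ξ m t ω).Reachable k i ∧ lv i ω ≤ t * m i}).Finite}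
          ≤ μ (⋃ j, RS (j + n)) := measure_mono (hsub n hn)
        _ ≤ ∑' j, μ (RS (j + n)) := measure_iUnion_le _
        _ ≤ ∑' j, Cst * (e (j + n) * e (j + n)) :=
            ENNReal.tsum_le_tsum fun j => hRSbound _ (by omega)
    exact le_antisymm (by simpa using hlast) zero_le
  -- assembly
  set Good : Set Ω := {ω | ∀ k : ℕ,
    {i : ℕ | (expGraph ξ m t ω).Reachable k i ∧ lv i ω ≤ t * m i}.Finite} with hGood
  have hcompl : Goodᶜ = ⋃ k : ℕ,
      {ω | ¬ ({i : ℕ | (expGraph ξ m t ω).Reachable k i ∧ lv i ω ≤ t * m i}).Finite} := by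
    ext ω
    simp [hGood, not_forall]
  have hnull : μ Goodᶜ = 0 := by
    rw [hcompl]
    exact measure_iUnion_null fun k => hknull k
  have h1 : (1 : ℝ≥0∞) ≤ μ Good := by
    have := measure_union_le (μ := μ) Good Goodᶜ
    rw [Set.union_compl_self, measure_univ, hnull, add_zero] at this
    exact this
  exact le_antisymm prob_le_one h1
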